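/- Let I = (𝔼, D, c, f) be a CMP instance whose objective f is of type product. Then for every e ∈ 𝔼 it holds that l'(I,e) = ((f(D+(e)) − f(I)) / f(D+(e))) · c(e), where the right-hand side is interpreted as c(e) when D+(e) = ∅ (so that f(D+(e)) = ∞). -/

import Mathlib

open scoped ENNReal BigOperators

/-- Objective type of a combinatorial minimization problem:
sum, product, or bottleneck. -/
inductive ObjType where
  | sum : ObjType
  | prod : ObjType
  | bottleneck : ObjType
deriving DecidableEq

/-- The cost `f_c(S)` of a feasible solution `S` under cost function `c`:
the sum, the product, or the maximum (for nonempty `S`) of the element costs. -/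
noncomputable def objCost {ι : Type*} (t : ObjType) (c : ι → ℝ) (S : Finset ι) : ℝ :=
  match t with
  | ObjType.sum => ∑ e ∈ S, c e
  | ObjType.prod => ∏ e ∈ S, c e
  | ObjType.bottleneck => if h : S.Nonempty then S.sup' h c else 0

/-- The optimal objective value `f(I)` of the instance with feasible set `D`. -/
noncomputable def optVal {ι : Type*} (t : ObjType) (c : ι → ℝ) (D : Finset (Finset ι)) : ℝ :=
  if h : D.Nonempty then D.inf' h (objCost t c) else 0

/-- `S` is an optimal solution of the instance `(𝔼, D, c, f)`. -/
def isOpt {ι : Type*} (t : ObjType) (c : ι → ℝ) (D : Finset (Finset ι)) (S : Finset ι) : Prop :=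
  S ∈ D ∧ objCost t c S = optVal t c D

/-- `0 ≤ a < maxdec(e)`, where `maxdec(e) = ∞` for sum/bottleneck objectives and
`maxdec(e) = c(e)` for the product objective. -/
def decOK {ι : Type*} (t : ObjType) (c : ι → ℝ) (e : ι) (a : ℝ) : Prop :=
  0 ≤ a ∧ (t = ObjType.prod → a < c e)

/-- Extended single upper tolerance
`u'(I,e) = sup {α ≥ 0 : every optimal solution of I is optimal for I_{α,e}}` valued in `[0,∞]`. -/
noncomputable def uTol {ι : Type*} [DecidableEq ι] (t : ObjType) (c : ι → ℝ)
    (D : Finset (Finset ι)) (e : ι) : ℝ≥0∞ :=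
  sSup (ENNReal.ofReal '' {a : ℝ | 0 ≤ a ∧
    ∀ S : Finset ι, isOpt t c D S →
      isOpt t (fun x => if x = e then c x + a else c x) D S})

/-- Extended regular set upper tolerance `u'(I,E)`, valued in `[0,∞]`. -/
noncomputable def uTolSet {ι : Type*} [DecidableEq ι] (t : ObjType) (c : ι → ℝ)
    (D : Finset (Finset ι)) (E : Finset ι) : ℝ≥0∞ :=
  sSup (ENNReal.ofReal '' {a : ℝ |
    ∀ S : Finset ι, isOpt t c D S →
      ∃ α : ι → ℝ, (∀ x, 0 ≤ α x) ∧ (∀ x ∉ E, α x = 0) ∧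
        a = ∑ x ∈ E, α x ∧ isOpt t (fun x => c x + α x) D S})

/-- Extended reverse set upper tolerance `u_b'(I,E)`, valued in `[0,∞]` (`inf ∅ = ∞`). -/
noncomputable def uTolSetRev {ι : Type*} [DecidableEq ι] (t : ObjType) (c : ι → ℝ)
    (D : Finset (Finset ι)) (E : Finset ι) : ℝ≥0∞ :=
  sInf (ENNReal.ofReal '' {a : ℝ |
    ∃ S : Finset ι, isOpt t c D S ∧
      ∃ α : ι → ℝ, (∀ x, 0 ≤ α x) ∧ (∀ x ∉ E, α x = 0) ∧
        a = ∑ x ∈ E, α x ∧ ¬ isOpt t (fun x => c x + α x) D S})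

/-- New single lower tolerance
`l'(I,e) = sup {α : 0 ≤ α < maxdec(e), f(I_{−α,e}) = f(I)}`, valued in `[0,∞]`. -/
noncomputable def lTol {ι : Type*} [DecidableEq ι] (t : ObjType) (c : ι → ℝ)
    (D : Finset (Finset ι)) (e : ι) : ℝ≥0∞ :=
  sSup (ENNReal.ofReal '' {a : ℝ | decOK t c e a ∧
    optVal t (fun x => if x = e then c x - a else c x) D = optVal t c D})

/-- New regular set lower tolerance `l'(I,E)`, valued in `[0,∞]`. -/
noncomputable def lTolSet {ι : Type*} [DecidableEq ι] (t : ObjType) (c : ι → ℝ)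
    (D : Finset (Finset ι)) (E : Finset ι) : ℝ≥0∞ :=
  sSup (ENNReal.ofReal '' {a : ℝ |
    ∃ α : ι → ℝ, (∀ x ∈ E, decOK t c x (α x)) ∧ (∀ x ∉ E, α x = 0) ∧
      a = ∑ x ∈ E, α x ∧ optVal t (fun x => c x - α x) D = optVal t c D})

/-- New reverse set lower tolerance `l_b'(I,E)`, valued in `[0,∞]` (`inf ∅ = ∞`). -/
noncomputable def lTolSetRev {ι : Type*} [DecidableEq ι] (t : ObjType) (c : ι → ℝ)
    (D : Finset (Finset ι)) (E : Finset ι) : ℝ≥0∞ :=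
  sInf (ENNReal.ofReal '' {a : ℝ |
    ∃ α : ι → ℝ, (∀ x ∈ E, decOK t c x (α x)) ∧ (∀ x ∉ E, α x = 0) ∧
      a = ∑ x ∈ E, α x ∧ optVal t (fun x => c x - α x) D < optVal t c D})


section helpers

variable {ι : Type*} [DecidableEq ι]

lemma prod_shift (c : ι → ℝ) (e : ι) (a : ℝ) (S : Finset ι) :
    (∏ x ∈ S, (if x = e then c x - a else c x)) =
      if e ∈ S then (c e - a) * ∏ x ∈ S.erase e, c x else ∏ x ∈ S, c x := by
  by_cases he : e ∈ S
  · rw [if_pos he, ← Finset.mul_prod_erase S _ he, if_pos rfl]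
    congr 1
    refine Finset.prod_congr rfl fun x hx => ?_
    rw [if_neg (Finset.ne_of_mem_erase hx)]
  · rw [if_neg he]
    refine Finset.prod_congr rfl fun x hx => ?_
    rw [if_neg]; rintro rfl; exact he hx

lemma sSup_ofReal_Icc (T : ℝ) (hT : 0 ≤ T) :
    sSup (ENNReal.ofReal '' Set.Icc 0 T) = ENNReal.ofReal T := by
  apply le_antisymm
  · exact sSup_le (by rintro x ⟨b, ⟨_, hb⟩, rfl⟩; exact ENNReal.ofReal_le_ofReal hb)
  · exact le_sSup ⟨T, ⟨hT, le_rfl⟩, rfl⟩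

lemma sSup_ofReal_Ico (T : ℝ) (hT : 0 < T) :
    sSup (ENNReal.ofReal '' Set.Ico 0 T) = ENNReal.ofReal T := by
  apply le_antisymm
  · exact sSup_le (by rintro x ⟨b, ⟨_, hb⟩, rfl⟩; exact ENNReal.ofReal_le_ofReal hb.le)
  · refine ENNReal.le_of_forall_nnreal_lt fun r hr => ?_
    have hrT : (r : ℝ) < T := by
      have := ENNReal.toReal_lt_toReal (by simp) (by simp) |>.mpr hr
      simpa [ENNReal.toReal_ofReal hT.le] using this
    refine le_sSup ⟨(r : ℝ), ⟨r.coe_nonneg, hrT⟩, ?_⟩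
    simp [ENNReal.ofReal_coe_nnreal]

end helpers

/-- Theorem 5(c): for a product objective,
`l'(I,e) = ((f(D⁺(e)) − f(I)) / f(D⁺(e))) · c(e)`, interpreted as `c(e)`
when `D⁺(e) = ∅` (so that `f(D⁺(e)) = ∞`). -/
theorem lsi_formula_prod {ι : Type*} [Fintype ι] [DecidableEq ι]
    (c : ι → ℝ) (D : Finset (Finset ι))
    (hD : D.Nonempty) (hSne : ∀ S ∈ D, S.Nonempty)
    (hpos : ∀ x, 0 < c x) :
    ∀ e : ι, lTol ObjType.prod c D e =
      if h : (D.filter fun S => e ∈ S).Nonempty then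
        ENNReal.ofReal
          ((((D.filter fun S => e ∈ S).inf' h (objCost ObjType.prod c)
              - optVal ObjType.prod c D)
            / ((D.filter fun S => e ∈ S).inf' h (objCost ObjType.prod c))) * c e)
      else ENNReal.ofReal (c e) := by
  intro e
  have hce : 0 < c e := hpos e
  have hcostpos : ∀ S ∈ D, 0 < objCost ObjType.prod c S := fun S _ =>
    Finset.prod_pos fun x _ => hpos x
  have hFdef : optVal ObjType.prod c D = D.inf' hD (objCost ObjType.prod c) := by
    rw [optVal, dif_pos hD]
  set F := optVal ObjType.prod c D with hF
  have hFpos : 0 < F := by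
    rw [hFdef, Finset.lt_inf'_iff]
    exact hcostpos
  have hFle : ∀ S ∈ D, F ≤ objCost ObjType.prod c S := fun S hS => by
    rw [hFdef]; exact Finset.inf'_le _ hS
  obtain ⟨S0, hS0D, hS0⟩ := Finset.exists_mem_eq_inf' hD (objCost ObjType.prod c)
  rw [← hFdef] at hS0
  -- new cost description
  have hnew : ∀ a : ℝ, optVal ObjType.prod (fun x => if x = e then c x - a else c x) D
      = D.inf' hD (fun S => if e ∈ S then (c e - a) * ∏ x ∈ S.erase e, c x
          else objCost ObjType.prod c S) := by
    intro a
    rw [optVal, dif_pos hD]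
    exact Finset.inf'_congr hD rfl fun S _ => prod_shift c e a S
  have herase : ∀ S : Finset ι, e ∈ S →
      objCost ObjType.prod c S = c e * ∏ x ∈ S.erase e, c x := fun S hS =>
    (Finset.mul_prod_erase S c hS).symm
  by_cases h : (D.filter fun S => e ∈ S).Nonempty
  · -- D⁺(e) nonempty
    rw [dif_pos h]
    set Fp := (D.filter fun S => e ∈ S).inf' h (objCost ObjType.prod c) with hFp
    obtain ⟨S1, hS1, hS1eq⟩ := Finset.exists_mem_eq_inf' h (objCost ObjType.prod c)
    rw [← hFp] at hS1eq
    have hS1D : S1 ∈ D := (Finset.mem_filter.mp hS1).1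
    have hS1e : e ∈ S1 := (Finset.mem_filter.mp hS1).2
    have hFpleF : F ≤ Fp := by rw [hS1eq]; exact hFle S1 hS1D
    have hFppos : 0 < Fp := lt_of_lt_of_le hFpos hFpleF
    have hFple : ∀ S ∈ D, e ∈ S → Fp ≤ objCost ObjType.prod c S := fun S hS heS => by
      rw [hFp]; exact Finset.inf'_le _ (Finset.mem_filter.mpr ⟨hS, heS⟩)
    set T := (Fp - F) / Fp * c e with hT
    have hT0 : 0 ≤ T := by
      apply mul_nonneg (div_nonneg (by linarith) hFppos.le) hce.le
    have hTlt : T < c e := by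
      rw [hT]
      have : (Fp - F) / Fp < 1 := (div_lt_one hFppos).mpr (by linarith)
      nlinarith
    have hset : {a : ℝ | decOK ObjType.prod c e a ∧
        optVal ObjType.prod (fun x => if x = e then c x - a else c x) D = F}
        = Set.Icc 0 T := by
      ext a
      simp only [Set.mem_setOf_eq, Set.mem_Icc]
      constructor
      · rintro ⟨hd, hcond⟩
        obtain ⟨ha0, hace'⟩ := hd
        have hace : a < c e := hace' rfl
        refine ⟨ha0, ?_⟩
        by_contra hgt
        push_neg at hgt
        -- new optVal < F, contradiction
        have hkey : (c e - a) * Fp < F * c e := by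
          have : a * Fp > (Fp - F) * c e := by
            rw [hT] at hgt
            calc (Fp - F) * c e = (Fp - F) / Fp * c e * Fp := by
                  field_simp
              _ < a * Fp := by
                  exact mul_lt_mul_of_pos_right hgt hFppos
          nlinarith
        have hle : optVal ObjType.prod (fun x => if x = e then c x - a else c x) D
            ≤ (c e - a) * ∏ x ∈ S1.erase e, c x := by
          rw [hnew a]
          have := Finset.inf'_le (fun S => if e ∈ S then
              (c e - a) * ∏ x ∈ S.erase e, c x else objCost ObjType.prod c S)
              hS1D
          exact le_trans this (le_of_eq (by simp [hS1e]))
        have hval : (c e - a) * ∏ x ∈ S1.erase e, c x < F := by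
          have hEr : objCost ObjType.prod c S1 = c e * ∏ x ∈ S1.erase e, c x :=
            herase S1 hS1e
          have hprodpos : 0 < ∏ x ∈ S1.erase e, c x :=
            Finset.prod_pos fun x _ => hpos x
          have : Fp = c e * ∏ x ∈ S1.erase e, c x := by rw [← hEr, hS1eq]
          nlinarith
        rw [hcond] at hle
        linarith
      · rintro ⟨ha0, haT⟩
        have hace : a < c e := lt_of_le_of_lt haT hTlt
        refine ⟨⟨ha0, fun _ => hace⟩, ?_⟩
        show optVal ObjType.prod (fun x => if x = e then c x - a else c x) D = F
        have hkey : F * c e ≤ Fp * (c e - a) := by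
          have : a * Fp ≤ (Fp - F) * c e := by
            rw [hT] at haT
            calc a * Fp ≤ (Fp - F) / Fp * c e * Fp :=
                  mul_le_mul_of_nonneg_right haT hFppos.le
              _ = (Fp - F) * c e := by field_simp
          nlinarith
        rw [hnew a]
        apply le_antisymm
        · -- ≤ F : use S0
          by_cases heS0 : e ∈ S0
          · -- then F = Fp and a = 0
            have hFpF : Fp = F := le_antisymm (by rw [hS0]; exact hFple S0 hS0D heS0)
              hFpleF
            have hTz : T = 0 := by rw [hT, hFpF]; simp
            have haz : a = 0 := le_antisymm (hTz ▸ haT) ha0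
            have := Finset.inf'_le (fun S => if e ∈ S then
                (c e - a) * ∏ x ∈ S.erase e, c x else objCost ObjType.prod c S)
                hS0D
            calc D.inf' hD _ ≤ _ := this
              _ = F := by
                  rw [if_pos heS0, haz, sub_zero, ← herase S0 heS0, ← hS0]
          · have := Finset.inf'_le (fun S => if e ∈ S then
                (c e - a) * ∏ x ∈ S.erase e, c x else objCost ObjType.prod c S)
                hS0D
            calc D.inf' hD _ ≤ _ := this
              _ = F := by rw [if_neg heS0, ← hS0]
        · -- ≥ F
          rw [Finset.le_inf'_iff]
          intro S hS
          by_cases heS : e ∈ S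
          · rw [if_pos heS]
            have hEr := herase S heS
            have hprodpos : 0 < ∏ x ∈ S.erase e, c x :=
              Finset.prod_pos fun x _ => hpos x
            have hcge : Fp ≤ c e * ∏ x ∈ S.erase e, c x := hEr ▸ hFple S hS heS
            have hca : 0 < c e - a := by linarith
            -- F * c e ≤ Fp * (c e - a) ≤ (c e * prod) * (c e - a)
            have : F * c e ≤ (c e * ∏ x ∈ S.erase e, c x) * (c e - a) := by
              nlinarith
            nlinarith
          · rw [if_neg heS]
            exact hFle S hS
    rw [lTol, hset, sSup_ofReal_Icc T hT0]
  · -- D⁺(e) empty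
    rw [dif_neg h]
    have hnot : ∀ S ∈ D, e ∉ S := by
      intro S hS heS
      exact h ⟨S, Finset.mem_filter.mpr ⟨hS, heS⟩⟩
    have hset : {a : ℝ | decOK ObjType.prod c e a ∧
        optVal ObjType.prod (fun x => if x = e then c x - a else c x) D = F}
        = Set.Ico 0 (c e) := by
      ext a
      simp only [Set.mem_setOf_eq, Set.mem_Ico]
      constructor
      · rintro ⟨hd, -⟩
        exact ⟨hd.1, hd.2 rfl⟩
      · rintro ⟨ha0, hace⟩
        refine ⟨⟨ha0, fun _ => hace⟩, ?_⟩
        show optVal ObjType.prod (fun x => if x = e then c x - a else c x) D = F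
        rw [hnew a, hFdef]
        exact Finset.inf'_congr hD rfl fun S hS => by rw [if_neg (hnot S hS)]
    rw [lTol, hset, sSup_ofReal_Ico (c e) hce]
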